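/- arXiv:2312.00350 — 6 statements merged into one kernel-verified Lean document; each statement's English description precedes it below -/
import Mathlib

section
/- For u > arccosh(3/2), the function u ↦ u − φ(u), where φ(u) = arccosh(cosh u − 1/2), is strictly monotonically decreasing and tends to 0 as u → ∞. -/
noncomputable def arcosh (x : ℝ) : ℝ := Real.log (x + Real.sqrt (x ^ 2 - 1))

noncomputable def kappa : ℝ := arcosh (3 / 2)

noncomputable def phi (u : ℝ) : ℝ := arcosh (Real.cosh u - 1 / 2)

noncomputable def G (s : ℝ) : ℝ :=
  ((1 - s + s ^ 2) + Real.sqrt ((1 - s + s ^ 2) ^ 2 - 4 * s ^ 2)) / 2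

lemma kappa_pos : 0 < kappa := by
  unfold kappa arcosh
  apply Real.log_pos
  nlinarith [Real.sqrt_nonneg ((3/2:ℝ)^2 - 1)]

lemma cosh_kappa : Real.cosh kappa = 3 / 2 := by
  unfold kappa arcosh
  set r := Real.sqrt ((3/2:ℝ)^2 - 1) with hr_def
  have hr2 : r ^ 2 = 5 / 4 := by
    rw [hr_def, Real.sq_sqrt (by norm_num : (0:ℝ) ≤ (3/2:ℝ)^2 - 1)]; norm_num
  have hrpos : 0 ≤ r := Real.sqrt_nonneg _
  set y := 3/2 + r with hy_def
  have hy : 0 < y := by rw [hy_def]; linarith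
  rw [Real.cosh_eq, Real.exp_log hy, Real.exp_neg, Real.exp_log hy]
  rw [inv_eq_one_div]
  field_simp
  rw [hy_def]
  nlinarith [hr2]

lemma cosh_gt (u : ℝ) (hu : kappa < u) : 3 / 2 < Real.cosh u := by
  rw [← cosh_kappa, Real.cosh_lt_cosh]
  rw [abs_of_pos kappa_pos, abs_of_pos (kappa_pos.trans hu)]
  exact hu

lemma key (u : ℝ) (hc : 3 / 2 < Real.cosh u) :
    Real.exp (phi u - u) = G (Real.exp (-u)) := by
  set s := Real.exp (-u) with hs_def
  have hs : 0 < s := Real.exp_pos _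
  have hsu : Real.exp u * s = 1 := by rw [hs_def, ← Real.exp_add]; simp
  set c := Real.cosh u - 1 / 2 with hc_def
  have hc1 : 1 < c := by simp [hc_def]; linarith
  have hcs : c * s = (1 - s + s ^ 2) / 2 := by
    rw [hc_def, Real.cosh_eq]
    field_simp
    nlinarith [hsu]
  have hsq : (1 - s + s ^ 2) ^ 2 - 4 * s ^ 2 = (2 * s) ^ 2 * (c ^ 2 - 1) := by
    have : 1 - s + s ^ 2 = 2 * (c * s) := by rw [hcs]; ring
    rw [this]; ring
  have hphi : phi u = Real.log (c + Real.sqrt (c ^ 2 - 1)) := rfl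
  have hpos : 0 < c + Real.sqrt (c ^ 2 - 1) := by
    have := Real.sqrt_nonneg (c ^ 2 - 1); linarith
  rw [sub_eq_add_neg, Real.exp_add, hphi, Real.exp_log hpos, ← hs_def]
  rw [G, hsq, Real.sqrt_mul (sq_nonneg _), Real.sqrt_sq (by linarith : (0:ℝ) ≤ 2 * s)]
  linear_combination hcs

lemma s_quad (u : ℝ) (hu : kappa < u) :
    0 < Real.exp (-u) ∧ Real.exp (-u) < 1 ∧
      0 < (Real.exp (-u)) ^ 2 - 3 * Real.exp (-u) + 1 := by
  set s := Real.exp (-u) with hs_def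
  have hs : 0 < s := Real.exp_pos _
  have hs1 : s < 1 := by
    rw [hs_def, Real.exp_lt_one_iff]
    have := kappa_pos; linarith
  refine ⟨hs, hs1, ?_⟩
  have hc := cosh_gt u hu
  rw [Real.cosh_eq] at hc
  have hsu : Real.exp u * s = 1 := by rw [hs_def, ← Real.exp_add]; simp
  have h3 : 3 < Real.exp u + s := by rw [hs_def]; linarith
  nlinarith [mul_lt_mul_of_pos_right h3 hs, hsu]

lemma G_anti {s1 s2 : ℝ} (h2 : 0 < s2) (h12 : s2 < s1) (h1 : s1 < 1)
    (hq1 : 0 < s1 ^ 2 - 3 * s1 + 1) : G s1 < G s2 := by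
  have hhalf : s1 < 1 / 2 := by nlinarith
  have hq2 : 0 < s2 ^ 2 - 3 * s2 + 1 := by nlinarith
  have hD1 : (0:ℝ) ≤ (1 - s1 + s1 ^ 2) ^ 2 - 4 * s1 ^ 2 := by nlinarith
  have hB : 1 - s1 + s1 ^ 2 < 1 - s2 + s2 ^ 2 := by nlinarith
  have hB1 : 0 < 1 - s1 + s1 ^ 2 := by nlinarith
  have hD : (1 - s1 + s1 ^ 2) ^ 2 - 4 * s1 ^ 2 < (1 - s2 + s2 ^ 2) ^ 2 - 4 * s2 ^ 2 := by
    nlinarith [mul_pos (sub_pos.2 hB) (by linarith : (0:ℝ) < (1 - s1 + s1 ^ 2) + (1 - s2 + s2 ^ 2)),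
      mul_pos (sub_pos.2 h12) (by linarith : (0:ℝ) < s1 + s2)]
  have hsq := Real.sqrt_lt_sqrt hD1 hD
  unfold G
  linarith

theorem u_sub_phi_strictAnti_tendsto_zero :
    StrictAntiOn (fun u => u - phi u) (Set.Ioi kappa) ∧
      Filter.Tendsto (fun u => u - phi u) Filter.atTop (nhds 0) := by
  have hrepr : ∀ u, kappa < u → u - phi u = -Real.log (G (Real.exp (-u))) := by
    intro u hu
    rw [← key u (cosh_gt u hu), Real.log_exp]
    ring
  constructor
  · intro u1 hu1 u2 hu2 h12
    simp only [Set.mem_Ioi] at hu1 hu2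
    show u2 - phi u2 < u1 - phi u1
    rw [hrepr u1 hu1, hrepr u2 hu2]
    have h1 := s_quad u1 hu1
    have h2 := s_quad u2 hu2
    have hG : G (Real.exp (-u1)) < G (Real.exp (-u2)) :=
      G_anti h2.1 (Real.exp_lt_exp.2 (by linarith)) h1.2.1 h1.2.2
    have hGpos : 0 < G (Real.exp (-u1)) := by
      rw [← key u1 (cosh_gt u1 hu1)]; exact Real.exp_pos _
    have := Real.log_lt_log hGpos hG
    linarith
  · have hG0 : G 0 = 1 := by unfold G; norm_num
    have hcont : Filter.Tendsto (fun u => G (Real.exp (-u))) Filter.atTop (nhds 1) := by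
      have hGc : Continuous G := by
        unfold G
        continuity
      have := hGc.continuousAt (x := 0)
      rw [← hG0]
      exact (hGc.tendsto 0).comp Real.tendsto_exp_neg_atTop_nhds_zero
    have hlog : Filter.Tendsto (fun u => -Real.log (G (Real.exp (-u)))) Filter.atTop (nhds 0) := by
      have h := (Real.continuousAt_log (by norm_num : (1:ℝ) ≠ 0)).tendsto.comp hcont
      simpa [Function.comp] using h.neg
    apply hlog.congr'
    filter_upwards [Filter.eventually_gt_atTop kappa] with u hu
    exact (hrepr u hu).symm
end

section
/- For u > arccosh(3/2), the function u ↦ e^u − e^{φ(u)}, where φ(u) = arccosh(cosh u − 1/2), is strictly monotonically decreasing. -/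
lemma hasDerivAt_arcosh {x : ℝ} (hx : 1 < x) :
    HasDerivAt arcosh (1 / Real.sqrt (x ^ 2 - 1)) x := by
  have h1 : (0:ℝ) < x ^ 2 - 1 := by nlinarith
  have hs : 0 < Real.sqrt (x ^ 2 - 1) := Real.sqrt_pos.2 h1
  have hd1 : HasDerivAt (fun y : ℝ => y ^ 2 - 1) (2 * x) x := by
    simpa using ((hasDerivAt_pow 2 x).sub_const 1)
  have hd2 : HasDerivAt (fun y : ℝ => Real.sqrt (y ^ 2 - 1))
      (x / Real.sqrt (x ^ 2 - 1)) x := by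
    have := (Real.hasDerivAt_sqrt (ne_of_gt h1)).comp x hd1
    refine this.congr_deriv ?_
    field_simp
  have hd3 : HasDerivAt (fun y : ℝ => y + Real.sqrt (y ^ 2 - 1))
      (1 + x / Real.sqrt (x ^ 2 - 1)) x := (hasDerivAt_id x).add hd2
  have hpos : 0 < x + Real.sqrt (x ^ 2 - 1) := by positivity
  have := (Real.hasDerivAt_log (ne_of_gt hpos)).comp x hd3
  unfold arcosh
  refine this.congr_deriv ?_
  field_simp
  ring

set_option maxHeartbeats 1000000 in
theorem exp_u_sub_exp_phi_strictAnti :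
    StrictAntiOn (fun u => Real.exp u - Real.exp (phi u)) (Set.Ioi kappa) := by
  have hr2 : Real.sqrt (5/4) ^ 2 = 5/4 := Real.sq_sqrt (by norm_num)
  have hr1 : (1:ℝ) < Real.sqrt (5/4) := by
    nlinarith [Real.sqrt_nonneg (5/4 : ℝ)]
  have hκ : Real.exp kappa = 3/2 + Real.sqrt (5/4) := by
    unfold kappa arcosh
    rw [show ((3:ℝ)/2) ^ 2 - 1 = 5/4 by norm_num, Real.exp_log (by positivity)]
  have key : ∀ u ∈ Set.Ioi kappa,
      ∃ d, HasDerivAt (fun u => Real.exp u - Real.exp (phi u)) d u ∧ d < 0 := by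
    intro u hu
    set t := Real.exp u with htdef
    clear_value t
    have ht0 : 0 < t := htdef ▸ Real.exp_pos u
    have ht : 3/2 + Real.sqrt (5/4) < t := by
      rw [htdef, ← hκ]; exact Real.exp_lt_exp.2 hu
    have ht1 : 1 < t := by nlinarith
    set c := Real.cosh u - 1/2 with hcdef
    clear_value c
    have hcosh : Real.cosh u = (t + t⁻¹) / 2 := by
      rw [htdef, Real.cosh_eq, Real.exp_neg]
    have h2tc : 2 * t * c = t ^ 2 - t + 1 := by
      rw [hcdef, hcosh]; field_simp; ring
    have h31 : 0 < t ^ 2 - 3 * t + 1 := by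
      nlinarith [hr2, hr1, ht, Real.sqrt_nonneg (5/4:ℝ)]
    have hc : 1 < c := by
      rw [hcdef, hcosh]
      have e : t + t⁻¹ - 3 = (t ^ 2 - 3 * t + 1) / t := by field_simp; ring
      have h3 := div_pos h31 ht0
      rw [← e] at h3
      linarith
    have hc21 : (0:ℝ) < c ^ 2 - 1 := by nlinarith
    set s := Real.sqrt (c ^ 2 - 1) with hsdef
    clear_value s
    have hs : 0 < s := hsdef ▸ Real.sqrt_pos.2 hc21
    have hs2 : s ^ 2 = c ^ 2 - 1 := by rw [hsdef]; exact Real.sq_sqrt hc21.le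
    -- derivative of phi
    have hdc : HasDerivAt (fun u => Real.cosh u - 1/2) (Real.sinh u) u :=
      (Real.hasDerivAt_cosh u).sub_const _
    have hc' : (1:ℝ) < Real.cosh u - 1/2 := hcdef ▸ hc
    have hdphi : HasDerivAt phi (1 / s * Real.sinh u) u := by
      rw [hsdef, hcdef]
      exact (hasDerivAt_arcosh hc').comp u hdc
    have hexpphi : Real.exp (phi u) = c + s := by
      rw [hsdef, hcdef]
      rw [show phi u = Real.log ((Real.cosh u - 1/2) +
        Real.sqrt ((Real.cosh u - 1/2) ^ 2 - 1)) from rfl]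
      rw [Real.exp_log]
      nlinarith [Real.sqrt_nonneg ((Real.cosh u - 1/2) ^ 2 - 1), hc']
    have hdf : HasDerivAt (fun u => Real.exp u - Real.exp (phi u))
        (t - (c + s) * (1 / s * Real.sinh u)) u := by
      have h2 := ((Real.hasDerivAt_exp (phi u)).comp u hdphi)
      rw [hexpphi] at h2
      have h1 := Real.hasDerivAt_exp u
      rw [← htdef] at h1
      exact h1.sub h2
    refine ⟨_, hdf, ?_⟩
    have hsinh : Real.sinh u = (t - t⁻¹) / 2 := by
      rw [htdef, Real.sinh_eq, Real.exp_neg]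
    -- main inequality: s*(t^2+1) < c*(t^2-1)
    have hmain : s * (t ^ 2 + 1) < c * (t ^ 2 - 1) := by
      have h4 : (2 * t * c) ^ 2 = (t ^ 2 - t + 1) ^ 2 := by rw [h2tc]
      have e1 : (c * (t ^ 2 - 1)) ^ 2 - (s * (t ^ 2 + 1)) ^ 2
          = (t ^ 2 + 1) ^ 2 - (t ^ 2 - t + 1) ^ 2 := by
        linear_combination (-(t ^ 2 + 1) ^ 2) * hs2 - h4
      have e2 : (0:ℝ) < (t ^ 2 + 1) ^ 2 - (t ^ 2 - t + 1) ^ 2 := by nlinarith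
      have hsq : (s * (t ^ 2 + 1)) ^ 2 < (c * (t ^ 2 - 1)) ^ 2 := by linarith
      have hsum : 0 < s * (t ^ 2 + 1) + c * (t ^ 2 - 1) := by
        have : 0 < t ^ 2 - 1 := by nlinarith
        have := mul_pos (lt_trans one_pos hc) this
        nlinarith [mul_pos hs (show (0:ℝ) < t ^ 2 + 1 by positivity)]
      nlinarith [hsq, hsum]
    rw [hsinh, sub_neg]
    rw [show (c + s) * (1 / s * ((t - t⁻¹) / 2)) = (c + s) * (t ^ 2 - 1) / (s * (2 * t)) by
      field_simp]
    rw [lt_div_iff₀ (by positivity)]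
    nlinarith [hmain, hs, ht1]
  apply strictAntiOn_of_deriv_neg (convex_Ioi kappa)
  · intro u hu
    exact ((key u hu).choose_spec.1).continuousAt.continuousWithinAt
  · rw [interior_Ioi]
    intro u hu
    obtain ⟨d, hd, hneg⟩ := key u hu
    rwa [hd.deriv]
end

section
/- Let u > arccosh(3/2) and φ(u) = arccosh(cosh u − 1/2). Define L_p(u) := Li₂(e^{−u−φ(u)}) − Li₂(e^{−u+φ(u)}) + u·φ(u) + 4pπ² for an integer p ≥ 1. Then the derivative of L_p with respect to u equals log(2cosh(u + φ(u)) − 2), which is positive. -/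
noncomputable def Li2 (x : ℝ) : ℝ := ∑' n : ℕ, x ^ (n + 1) / ((n : ℝ) + 1) ^ 2

lemma arcosh_pos {x : ℝ} (hx : 1 < x) : 0 < arcosh x := by
  have h : (1:ℝ) < x + Real.sqrt (x ^ 2 - 1) :=
    lt_of_lt_of_le hx (le_add_of_nonneg_right (Real.sqrt_nonneg _))
  exact Real.log_pos h

lemma cosh_arcosh {x : ℝ} (hx : 1 ≤ x) : Real.cosh (arcosh x) = x := by
  have hs : Real.sqrt (x ^ 2 - 1) ^ 2 = x ^ 2 - 1 := by
    rw [Real.sq_sqrt]; nlinarith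
  have hpos : 0 < x + Real.sqrt (x ^ 2 - 1) := by
    have := Real.sqrt_nonneg (x ^ 2 - 1); linarith
  have hinv : (x + Real.sqrt (x ^ 2 - 1))⁻¹ = x - Real.sqrt (x ^ 2 - 1) := by
    exact inv_eq_of_mul_eq_one_right (by nlinarith)
  rw [arcosh, Real.cosh_eq, Real.exp_log hpos, Real.exp_neg, Real.exp_log hpos, hinv]
  ring

lemma arcosh_hasDerivAt {x : ℝ} (hx : 1 < x) :
    HasDerivAt arcosh ((1 + 2 * x / (2 * Real.sqrt (x ^ 2 - 1))) / (x + Real.sqrt (x ^ 2 - 1))) x := by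
  have h1 : HasDerivAt (fun y : ℝ => y ^ 2 - 1) (2 * x) x := by
    simpa using (hasDerivAt_pow 2 x).sub_const 1
  have hne : x ^ 2 - 1 ≠ 0 := by nlinarith
  have h2 := h1.sqrt hne
  have h3 := (hasDerivAt_id x).add h2
  have hpos : 0 < x + Real.sqrt (x ^ 2 - 1) := by
    have := Real.sqrt_nonneg (x ^ 2 - 1); linarith
  have h4 := h3.log hpos.ne'
  rw [show arcosh = fun y : ℝ => Real.log (y + Real.sqrt (y ^ 2 - 1)) from rfl]
  simpa [arcosh, div_eq_mul_inv] using h4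

lemma Li2_hasDerivAt {x : ℝ} (hx0 : 0 < x) (hx1 : x < 1) :
    HasDerivAt Li2 (-Real.log (1 - x) / x) x := by
  set r : ℝ := (1 + x) / 2 with hr
  have hxr : x < r := by rw [hr]; linarith
  have hr1 : r < 1 := by rw [hr]; linarith
  have hr0 : (0:ℝ) < r := by rw [hr]; linarith
  have key : HasDerivAt (fun y : ℝ => ∑' n : ℕ, y ^ (n + 1) / ((n : ℝ) + 1) ^ 2)
      (∑' n : ℕ, x ^ n / ((n : ℝ) + 1)) x := by
    refine hasDerivAt_tsum_of_isPreconnected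
      (g := fun (n : ℕ) (y : ℝ) => y ^ (n + 1) / ((n : ℝ) + 1) ^ 2)
      (g' := fun (n : ℕ) (y : ℝ) => y ^ n / ((n : ℝ) + 1))
      (t := Metric.ball (0:ℝ) r) (u := fun n => r ^ n)
      (summable_geometric_of_lt_one hr0.le hr1) Metric.isOpen_ball
      ((convex_ball (0:ℝ) r).isPreconnected) ?_ ?_ (Metric.mem_ball_self hr0) ?_ ?_
    · intro n y _
      have h := (hasDerivAt_pow (n + 1) y).div_const (((n : ℝ) + 1) ^ 2)
      convert h using 1
      · rfl
      push_cast [Nat.add_sub_cancel]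
      have hne : ((n : ℝ) + 1) ≠ 0 := by positivity
      field_simp
    · intro n y hy
      rw [Metric.mem_ball, dist_zero_right, Real.norm_eq_abs] at hy
      have h1 : ‖y ^ n / ((n : ℝ) + 1)‖ ≤ |y| ^ n := by
        rw [norm_div, norm_pow, Real.norm_eq_abs, Real.norm_eq_abs,
          abs_of_pos (by positivity : (0:ℝ) < (n:ℝ)+1)]
        apply div_le_self (by positivity)
        simp [Nat.one_le_cast]
      exact h1.trans (pow_le_pow_left₀ (abs_nonneg y) hy.le n)
    · exact summable_zero.congr (fun n => by simp)
    · rw [Metric.mem_ball, dist_zero_right, Real.norm_eq_abs, abs_of_pos hx0]; exact hxr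
  have hsum : HasSum (fun n : ℕ => x ^ n / ((n : ℝ) + 1)) (-Real.log (1 - x) / x) := by
    have h := (Real.hasSum_pow_div_log_of_abs_lt_one
      (by rw [abs_of_pos hx0]; exact hx1)).mul_right x⁻¹
    rw [div_eq_mul_inv]
    refine HasSum.congr_fun h ?_
    intro n
    rw [pow_succ]
    field_simp
  rw [← hsum.tsum_eq]
  exact key

theorem Lp_hasDerivAt (p : ℕ) (hp : 1 ≤ p) (u : ℝ) (hu : kappa < u) :
    HasDerivAt
      (fun u => Li2 (Real.exp (-u - phi u)) - Li2 (Real.exp (-u + phi u))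
        + u * phi u + 4 * p * Real.pi ^ 2)
      (Real.log (2 * Real.cosh (u + phi u) - 2)) u ∧
    0 < Real.log (2 * Real.cosh (u + phi u) - 2) := by
  have hk0 : 0 < kappa := arcosh_pos (by norm_num)
  have hu0 : 0 < u := hk0.trans hu
  have hck : Real.cosh kappa = 3 / 2 := cosh_arcosh (by norm_num)
  have hcu : (3:ℝ) / 2 < Real.cosh u := by
    rw [← hck, Real.cosh_lt_cosh, abs_of_pos hk0, abs_of_pos hu0]; exact hu
  have hx1 : 1 < Real.cosh u - 1 / 2 := by linarith
  have hφpos : 0 < phi u := arcosh_pos hx1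
  have hcoshφ : Real.cosh (phi u) = Real.cosh u - 1 / 2 := cosh_arcosh hx1.le
  have hφu : phi u < u := by
    have h : Real.cosh (phi u) < Real.cosh u := by rw [hcoshφ]; linarith
    rw [Real.cosh_lt_cosh, abs_of_pos hφpos, abs_of_pos hu0] at h
    exact h
  -- differentiability of phi
  have hi : HasDerivAt (fun u : ℝ => Real.cosh u - 1 / 2) (Real.sinh u) u :=
    (Real.hasDerivAt_cosh u).sub_const _
  obtain ⟨d, hφ⟩ : ∃ d, HasDerivAt phi d u :=
    ⟨_, (arcosh_hasDerivAt hx1).comp u hi⟩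
  set a := Real.exp (-u - phi u) with haa
  set b := Real.exp (-u + phi u) with hbb
  have ha0 : 0 < a := Real.exp_pos _
  have hb0 : 0 < b := Real.exp_pos _
  have ha1 : a < 1 := Real.exp_lt_one_iff.mpr (by linarith)
  have hb1 : b < 1 := Real.exp_lt_one_iff.mpr (by linarith)
  set la := Real.log (1 - a) with hla
  set lb := Real.log (1 - b) with hlb
  -- key identity (1-a)(1-b) = exp(-u)
  have hEF : Real.exp (-u) * Real.exp u = 1 := by
    rw [← Real.exp_add]; simp
  have hCD : Real.exp (phi u) * Real.exp (-(phi u)) = 1 := by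
    rw [← Real.exp_add]; simp
  have hsumCD : Real.exp (phi u) + Real.exp (-(phi u)) = Real.exp u + Real.exp (-u) - 1 := by
    have h1 : Real.cosh (phi u) = (Real.exp (phi u) + Real.exp (-(phi u))) / 2 := Real.cosh_eq _
    have h2 : Real.cosh u = (Real.exp u + Real.exp (-u)) / 2 := Real.cosh_eq _
    rw [h1, h2] at hcoshφ
    linarith
  have haF : a = Real.exp (-u) * Real.exp (-(phi u)) := by
    rw [haa, ← Real.exp_add, sub_eq_add_neg]
  have hbF : b = Real.exp (-u) * Real.exp (phi u) := by
    rw [hbb, ← Real.exp_add]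
  have hab : (1 - a) * (1 - b) = Real.exp (-u) := by
    rw [haF, hbF]
    linear_combination (-(Real.exp (-u))) * hsumCD + (Real.exp (-u))^2 * hCD - hEF
  have h1 : la + lb = -u := by
    rw [hla, hlb, ← Real.log_mul (by linarith) (by linarith), hab, Real.log_exp]
  -- log identity
  have hGg : Real.exp (u + phi u) * Real.exp (-(u + phi u)) = 1 := by
    rw [← Real.exp_add, show u + phi u + -(u + phi u) = 0 from by ring, Real.exp_zero]
  have haG : a = Real.exp (-(u + phi u)) := by rw [haa, show -u - phi u = -(u + phi u) from by ring]
  have hkey : 2 * Real.cosh (u + phi u) - 2 = Real.exp (u + phi u) * (1 - a) ^ 2 := by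
    rw [Real.cosh_eq, haG]
    linear_combination (2 - Real.exp (-(u + phi u))) * hGg
  have h2 : Real.log (2 * Real.cosh (u + phi u) - 2) = (u + phi u) + 2 * la := by
    rw [hkey, Real.log_mul (Real.exp_ne_zero _) (pow_ne_zero 2 (sub_pos.mpr ha1).ne'), Real.log_exp,
      Real.log_pow, hla]
    push_cast
    ring
  -- derivative assembly
  have hA : HasDerivAt (fun u => Li2 (Real.exp (-u - phi u)))
      (-la / a * (a * (-1 - d))) u := by
    have hin : HasDerivAt (fun u : ℝ => -u - phi u) (-1 - d) u := by
      exact (hasDerivAt_id' u).neg.sub hφ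
    exact (Li2_hasDerivAt ha0 ha1).comp u hin.exp
  have hB : HasDerivAt (fun u => Li2 (Real.exp (-u + phi u)))
      (-lb / b * (b * (-1 + d))) u := by
    have hin : HasDerivAt (fun u : ℝ => -u + phi u) (-1 + d) u := by
      exact (hasDerivAt_id' u).neg.add hφ
    exact (Li2_hasDerivAt hb0 hb1).comp u hin.exp
  have hC : HasDerivAt (fun u : ℝ => u * phi u) (1 * phi u + u * d) u :=
    (hasDerivAt_id' u).mul hφ
  have total := ((hA.sub hB).add hC).add_const (4 * (p:ℝ) * Real.pi ^ 2)
  constructor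
  · convert total using 1
    · rfl
    · rfl
    · rfl
    rw [h2]
    field_simp
    linear_combination (1 - d) * h1
  · apply Real.log_pos
    have : Real.cosh kappa < Real.cosh (u + phi u) := by
      rw [Real.cosh_lt_cosh, abs_of_pos hk0, abs_of_pos (by linarith)]
      linarith
    rw [hck] at this
    linarith
end

section
/- Let U > 3/2, |T| ≤ 1, and 1 ≤ S < U − 1/2 be real numbers. Then (U − ST)² + (S² − 1)(1 − T²) > 1/4. -/
theorem key_estimate (U T S : ℝ) (hU : 3 / 2 < U) (hT : |T| ≤ 1)
    (hS1 : 1 ≤ S) (hS2 : S < U - 1 / 2) :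
    1 / 4 < (U - S * T) ^ 2 + (S ^ 2 - 1) * (1 - T ^ 2) := by
  obtain ⟨h1, h2⟩ := abs_le.mp hT
  nlinarith [sq_nonneg (U - S * T), sq_nonneg (1 - T), sq_nonneg (1 + T), sq_nonneg (S - 1), mul_nonneg (sub_nonneg.mpr hS1) (sub_nonneg.mpr h2)]
end

section
/- For all u > arccosh(3/2), with φ(u) = arccosh(cosh u − 1/2): (1 + e^{−7u/2 + 2φ(u)})(1 − e^{−u+φ(u)}) e^{u} < (1 + e^{3u/2 − 2φ(u)})(1 − e^{−u−φ(u)}); equivalently, log((1 + e^{−7u/2+2φ(u)})/(1 + e^{3u/2−2φ(u)})) + log((1 − e^{−u+φ(u)})/(1 − e^{−u−φ(u)})) + u < 0. -/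
lemma B_pos (s : ℝ) (hs : 1 < s) :
    0 < s^20 - s^18 - 2*s^17 + 4*s^16 + 2*s^15 - 8*s^14 - 3*s^13 + 13*s^12 + s^11 - 16*s^10 + 17*s^8 - 14*s^6 + 10*s^4 - 5*s^2 + 1 := by
  have he : (0:ℝ) < s - 1 := by linarith
  nlinarith [pow_pos he 2, pow_pos he 3, pow_pos he 4, pow_pos he 5, pow_pos he 6,
    pow_pos he 7, pow_pos he 8, pow_pos he 9, pow_pos he 10, pow_pos he 11,
    pow_pos he 12, pow_pos he 13, pow_pos he 14, pow_pos he 15, pow_pos he 16,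
    pow_pos he 17, pow_pos he 18, pow_pos he 19, pow_pos he 20]

lemma AB_pos (s : ℝ) (hs : 3/2 < s) :
    0 < (-s^18 + s^16 + 2*s^15 - 3*s^14 - s^13 + 5*s^12 - 7*s^10 + 7*s^8 - 6*s^6 + 4*s^4 - s^2)
      + (s^20 - s^18 - 2*s^17 + 4*s^16 + 2*s^15 - 8*s^14 - 3*s^13 + 13*s^12 + s^11 - 16*s^10 + 17*s^8 - 14*s^6 + 10*s^4 - 5*s^2 + 1) := by
  have he : (0:ℝ) < s - 3/2 := by linarith
  nlinarith [pow_pos he 2, pow_pos he 3, pow_pos he 4, pow_pos he 5, pow_pos he 6,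
    pow_pos he 7, pow_pos he 8, pow_pos he 9, pow_pos he 10, pow_pos he 11,
    pow_pos he 12, pow_pos he 13, pow_pos he 14, pow_pos he 15, pow_pos he 16,
    pow_pos he 17, pow_pos he 18, pow_pos he 19, pow_pos he 20]

lemma main_ineq (s p : ℝ) (hs : 3/2 < s) (hp1 : 1 < p) (hps : p < s^2)
    (hrel : s^2*p^2 + s^2 = p*(s^4 - s^2 + 1)) :
    (1 + p^2/s^7) * (1 - p/s^2) * s^2 < (1 + s^3/p^2) * (1 - 1/(s^2*p)) := by
  have hs0 : (0:ℝ) < s := by linarith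
  have hp0 : (0:ℝ) < p := by linarith
  have hB := B_pos s (by linarith)
  have hAB := AB_pos s hs
  have key : s^10 * ((p^2+s^3)*s^5*(s^2*p-1) - (s^7+p^2)*(s^2-p)*p^3)
      = (-s^18 + s^16 + 2*s^15 - 3*s^14 - s^13 + 5*s^12 - 7*s^10 + 7*s^8 - 6*s^6 + 4*s^4 - s^2)
      + (s^20 - s^18 - 2*s^17 + 4*s^16 + 2*s^15 - 8*s^14 - 3*s^13 + 13*s^12 + s^11 - 16*s^10 + 17*s^8 - 14*s^6 + 10*s^4 - 5*s^2 + 1) * p := by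
    linear_combination ((-s^14 - 2*s^13 + 3*s^12 + s^11 - 5*s^10 + 7*s^8 - 7*s^6 + 6*s^4 - 4*s^2 + 1)
      + (s^13 - s^12 + 2*s^10 - 3*s^8 + 3*s^6 - 3*s^4 + s^2)*p
      + (s^15 - s^10 + s^8 - 2*s^6 + s^4)*p^2 + (-s^8 + s^6)*p^3 + (s^8)*p^4) * hrel
  have hABp : 0 < (-s^18 + s^16 + 2*s^15 - 3*s^14 - s^13 + 5*s^12 - 7*s^10 + 7*s^8 - 6*s^6 + 4*s^4 - s^2)
      + (s^20 - s^18 - 2*s^17 + 4*s^16 + 2*s^15 - 8*s^14 - 3*s^13 + 13*s^12 + s^11 - 16*s^10 + 17*s^8 - 14*s^6 + 10*s^4 - 5*s^2 + 1) * p := by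
    nlinarith [mul_pos hB (show (0:ℝ) < p - 1 by linarith)]
  have hF : 0 < (p^2+s^3)*s^5*(s^2*p-1) - (s^7+p^2)*(s^2-p)*p^3 := by
    nlinarith [pow_pos hs0 10, key, hABp]
  have hid : (1 + s^3/p^2) * (1 - 1/(s^2*p)) - (1 + p^2/s^7) * (1 - p/s^2) * s^2
      = ((p^2+s^3)*s^5*(s^2*p-1) - (s^7+p^2)*(s^2-p)*p^3) / (s^7*p^3) := by
    field_simp
  rw [← sub_pos, hid]
  exact div_pos hF (by positivity)

set_option maxHeartbeats 1000000 in
theorem log_log_u (u : ℝ) (hu : kappa < u) :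
    (1 + Real.exp (-7 * u / 2 + 2 * phi u)) * (1 - Real.exp (-u + phi u)) * Real.exp u
        < (1 + Real.exp (3 * u / 2 - 2 * phi u)) * (1 - Real.exp (-u - phi u)) ∧
      Real.log ((1 + Real.exp (-7 * u / 2 + 2 * phi u)) / (1 + Real.exp (3 * u / 2 - 2 * phi u)))
        + Real.log ((1 - Real.exp (-u + phi u)) / (1 - Real.exp (-u - phi u))) + u < 0 := by
  -- basic bounds on kappa and u
  have hq0 : (0:ℝ) ≤ (3/2:ℝ)^2 - 1 := by norm_num
  have hq2 : Real.sqrt ((3/2:ℝ)^2 - 1) ^ 2 = 5/4 := by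
    rw [Real.sq_sqrt hq0]; norm_num
  have hqnn : 0 ≤ Real.sqrt ((3/2:ℝ)^2 - 1) := Real.sqrt_nonneg _
  have hq1 : 1 < Real.sqrt ((3/2:ℝ)^2 - 1) := by nlinarith
  have hek : Real.exp kappa = 3/2 + Real.sqrt ((3/2:ℝ)^2 - 1) := by
    rw [kappa, arcosh, Real.exp_log (by linarith)]
  have hkpos : 0 < kappa := by
    rw [kappa, arcosh]
    exact Real.log_pos (by nlinarith)
  have hu0 : 0 < u := lt_trans hkpos hu
  set a := Real.exp u with ha_def
  have ha0 : 0 < a := Real.exp_pos u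
  have ha : 3/2 + Real.sqrt ((3/2:ℝ)^2 - 1) < a := by
    rw [← hek]; exact Real.exp_lt_exp.mpr hu
  have ha52 : 5/2 < a := by linarith
  -- s = exp(u/2)
  set s := Real.exp (u/2) with hs_def
  have hs0 : 0 < s := Real.exp_pos _
  have hs2 : s^2 = a := by
    rw [hs_def, ha_def, sq, ← Real.exp_add]; ring_nf
  have hs32 : 3/2 < s := by nlinarith
  -- cosh u and x
  have hainv : a * a⁻¹ = 1 := mul_inv_cancel₀ (ne_of_gt ha0)
  have hcosh : Real.cosh u = (a + a⁻¹)/2 := by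
    rw [Real.cosh_eq, ha_def, Real.exp_neg]
  have hx1 : 1 < Real.cosh u - 1/2 := by
    have h : Real.cosh u - 1/2 - 1 = (a^2 - 3*a + 1)/(2*a) := by
      rw [hcosh]; field_simp; ring
    have hnum : 0 < a^2 - 3*a + 1 := by nlinarith
    nlinarith [div_pos hnum (by linarith : (0:ℝ) < 2*a)]
  set x := Real.cosh u - 1/2 with hx_def
  have hxsq : (0:ℝ) ≤ x^2 - 1 := by nlinarith
  set r := Real.sqrt (x^2 - 1) with hr_def
  have hr0 : 0 ≤ r := Real.sqrt_nonneg _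
  have hr2 : r^2 = x^2 - 1 := Real.sq_sqrt hxsq
  set p := Real.exp (phi u) with hp_def
  have hp : p = x + r := by
    rw [hp_def, phi, arcosh, ← hx_def, ← hr_def, Real.exp_log (by linarith)]
  have hp1 : 1 < p := by rw [hp]; linarith
  have hp0 : 0 < p := by linarith
  -- p < a
  have hsinh0 : 0 < Real.sinh u := Real.sinh_pos_iff.mpr hu0
  have hsinhsq : Real.sinh u ^ 2 = Real.cosh u ^ 2 - 1 := by
    have := Real.cosh_sq u
    linarith
  have hcx : Real.cosh u = x + 1/2 := by rw [hx_def]; ring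
  have hrs : r < Real.sinh u := by
    have h2 : r^2 < Real.sinh u ^ 2 := by
      rw [hr2, hsinhsq, hcx]
      nlinarith [hx1]
    exact lt_of_pow_lt_pow_left₀ 2 (le_of_lt hsinh0) h2
  have hpa : p < a := by
    have := Real.cosh_add_sinh u
    rw [hp]
    rw [ha_def, ← this]
    simp only [hx_def]
    linarith
  have hps : p < s^2 := by rw [hs2]; exact hpa
  -- the quadratic relation
  have hrel0 : p^2 + 1 = p * (2*x) := by
    rw [hp]; linear_combination hr2
  have hrel : s^2*p^2 + s^2 = p*(s^4 - s^2 + 1) := by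
    have h4 : s^4 = a^2 := by rw [← hs2]; ring
    rw [h4, hs2]
    have h2x : 2*x = a + a⁻¹ - 1 := by
      rw [hx_def, hcosh]; ring
    rw [h2x] at hrel0
    linear_combination a * hrel0 + p * hainv
  -- rewrite the exponentials
  have e_u : Real.exp u = s^2 := hs2.symm
  have e7 : Real.exp (-7 * u / 2 + 2 * phi u) = p^2 / s^7 := by
    rw [hp_def, hs_def, ← Real.exp_nat_mul, ← Real.exp_nat_mul, ← Real.exp_sub]
    congr 1
    push_cast
    ring
  have eZ : Real.exp (-u + phi u) = p / s^2 := by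
    rw [hp_def, hs_def, ← Real.exp_nat_mul, ← Real.exp_sub]
    congr 1
    push_cast
    ring
  have eY : Real.exp (3 * u / 2 - 2 * phi u) = s^3 / p^2 := by
    rw [hp_def, hs_def, ← Real.exp_nat_mul, ← Real.exp_nat_mul, ← Real.exp_sub]
    congr 1
    push_cast
    ring
  have eW : Real.exp (-u - phi u) = 1 / (s^2 * p) := by
    rw [hp_def, hs_def, ← Real.exp_nat_mul, ← Real.exp_add, one_div, ← Real.exp_neg]
    congr 1
    push_cast
    ring
  -- part 1
  have part1 : (1 + Real.exp (-7 * u / 2 + 2 * phi u)) * (1 - Real.exp (-u + phi u)) * Real.exp u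
      < (1 + Real.exp (3 * u / 2 - 2 * phi u)) * (1 - Real.exp (-u - phi u)) := by
    rw [e7, eZ, eY, eW, e_u]
    exact main_ineq s p hs32 hp1 hps hrel
  refine ⟨part1, ?_⟩
  -- part 2
  have hphi_lt : phi u < u := by
    have : Real.exp (phi u) < Real.exp u := by rw [← hp_def, ← ha_def]; exact hpa
    exact Real.exp_lt_exp.mp this
  have hphi_pos : 0 < phi u := by
    have : Real.exp 0 < Real.exp (phi u) := by rw [Real.exp_zero, ← hp_def]; exact hp1
    exact Real.exp_lt_exp.mp this
  have hZ1 : Real.exp (-u + phi u) < 1 := by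
    rw [← Real.exp_zero]
    exact Real.exp_lt_exp.mpr (by linarith)
  have hW1 : Real.exp (-u - phi u) < 1 := by
    rw [← Real.exp_zero]
    exact Real.exp_lt_exp.mpr (by linarith)
  have hX0 : (0:ℝ) < 1 + Real.exp (-7 * u / 2 + 2 * phi u) := by positivity
  have hY0 : (0:ℝ) < 1 + Real.exp (3 * u / 2 - 2 * phi u) := by positivity
  have hZ0 : (0:ℝ) < 1 - Real.exp (-u + phi u) := by linarith
  have hW0 : (0:ℝ) < 1 - Real.exp (-u - phi u) := by linarith
  have hL0 : (0:ℝ) < (1 + Real.exp (-7 * u / 2 + 2 * phi u)) * (1 - Real.exp (-u + phi u)) * Real.exp u := by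
    positivity
  rw [Real.log_div (ne_of_gt hX0) (ne_of_gt hY0), Real.log_div (ne_of_gt hZ0) (ne_of_gt hW0)]
  have hlog := Real.log_lt_log hL0 part1
  rw [Real.log_mul (by positivity) (ne_of_gt (Real.exp_pos u)),
    Real.log_mul (ne_of_gt hX0) (ne_of_gt hZ0), Real.log_exp,
    Real.log_mul (ne_of_gt hY0) (ne_of_gt hW0)] at hlog
  linarith
end

section
/- For all u > arccosh(3/2), with φ(u) = arccosh(cosh u − 1/2): log((1 + e^{−4u + 1/2 + 2φ(u)})/(1 + e^{2u − 1/2 − 2φ(u)})) + log((1 − e^{−u+φ(u)})/(1 − e^{−u−φ(u)})) + u < 0. -/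
theorem poly_ineq (C c q : ℝ) (hC : 2.61 < C) (hc : 1 < c) (hcC : c < C - 1)
    (hq0 : 1 < q) (hq : q < 1.65) :
    q*c^2*C^4*(2*C*c-1) + q^2*C^2*c^6 < C^6*(C*c-1)^2 := by
  have hC0 : (0:ℝ) < C := by linarith
  have hc0 : (0:ℝ) < c := by linarith
  have hCc : 2.61 < C * c := by nlinarith
  have h1 : q*c^2*C^4*(2*C*c-1) + q^2*C^2*c^6
      < 1.65*(c^2*C^4*(2*C*c-1)) + 2.7225*(C^2*c^6) := by
    have hp : (0:ℝ) < 2*C*c - 1 := by nlinarith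
    have p1 : 0 < c^2*C^4*(2*C*c-1) := by positivity
    have p2 : 0 < C^2*c^6 := by positivity
    nlinarith [mul_pos p2 (sub_pos.2 hq), mul_pos p1 (sub_pos.2 hq)]
  have hc4 : c^4 ≤ (C-1)^4 := by
    apply pow_le_pow_left₀ hc0.le hcC.le
  have k1 : c^6 ≤ c^2*(C-1)^4 := by
    calc c^6 = c^2*c^4 := by ring
    _ ≤ c^2*(C-1)^4 := mul_le_mul_of_nonneg_left hc4 (sq_nonneg c)
  have k2 : ((161/261)*(C*c))^2 ≤ (C*c-1)^2 := by nlinarith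
  have k3 : 1.65*(c^2*C^4*(2*C*c-1)) ≤ 3.3*C^5*(C-1)*c^2 := by
    have h : c*c^2 ≤ (C-1)*c^2 := mul_le_mul_of_nonneg_right hcC.le (sq_nonneg c)
    nlinarith [pow_pos hC0 4, pow_pos hC0 5,
      mul_le_mul_of_nonneg_left h (le_of_lt (by positivity : (0:ℝ) < 3.3*C^5))]
  have single : 3.3*C^5*(C-1) + 2.7225*C^2*(C-1)^4 ≤ (161/261)^2*C^8 := by
    nlinarith [pow_pos hC0 2, pow_pos hC0 4, sq_nonneg (C-2.61), pow_pos hC0 6,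
      mul_pos (pow_pos hC0 6) (sub_pos.2 hC)]
  have s1 := mul_le_mul_of_nonneg_right single (sq_nonneg c)
  have s2 := mul_le_mul_of_nonneg_left k1 (show (0:ℝ) ≤ 2.7225*C^2 by positivity)
  have s3 := mul_le_mul_of_nonneg_left k2 (le_of_lt (pow_pos hC0 6))
  linarith [h1, k3, s1, s2, s3]

set_option maxHeartbeats 1000000 in
theorem log_log_u2 (u : ℝ) (hu : kappa < u) :
    Real.log ((1 + Real.exp (-4 * u + 1 / 2 + 2 * phi u))
        / (1 + Real.exp (2 * u - 1 / 2 - 2 * phi u)))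
      + Real.log ((1 - Real.exp (-u + phi u)) / (1 - Real.exp (-u - phi u))) + u < 0 := by
  -- bridging facts, with let-bound variables
  set y : ℝ := 3/2 + Real.sqrt ((3/2:ℝ)^2 - 1) with hydef
  set C : ℝ := Real.exp u with hCdef
  set x : ℝ := Real.cosh u - 1/2 with hxdef
  set c : ℝ := Real.exp (phi u) with hcdef
  set q : ℝ := Real.exp (1/2) with hqdef
  have hsy : Real.sqrt ((3/2:ℝ)^2 - 1)^2 = (3/2:ℝ)^2 - 1 :=
    Real.sq_sqrt (by norm_num)
  have hsy0 : 0 ≤ Real.sqrt ((3/2:ℝ)^2 - 1) := Real.sqrt_nonneg _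
  have hy2 : y^2 - 3*y + 1 = 0 := by rw [hydef]; linear_combination hsy
  have hy261 : 2.61 < y := by rw [hydef]; nlinarith
  have hexpk : Real.exp kappa = y := by
    rw [show kappa = Real.log ((3:ℝ)/2 + Real.sqrt (((3:ℝ)/2) ^ 2 - 1)) from rfl, hydef]
    exact Real.exp_log (by nlinarith)
  have hyC : y < C := by rw [← hexpk, hCdef]; exact Real.exp_lt_exp.mpr hu
  have hC0 : (0:ℝ) < C := by rw [hCdef]; exact Real.exp_pos u
  have h2x : 2*x*C = C^2 + 1 - C := by
    rw [hxdef, Real.cosh_eq, ← hCdef, Real.exp_neg, ← hCdef]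
    field_simp
  have hsx : Real.sqrt (x^2-1)^2 = x^2 - 1 ∨ 1 ≥ x := by
    by_cases h : 1 ≥ x
    · exact Or.inr h
    · exact Or.inl (Real.sq_sqrt (by push_neg at h; nlinarith))
  have hsx0 : 0 ≤ Real.sqrt (x^2-1) := Real.sqrt_nonneg _
  have hcval : 1 < x → c = x + Real.sqrt (x^2-1) := by
    intro h
    rw [hcdef, show phi u = Real.log (x + Real.sqrt (x^2-1)) from rfl]
    exact Real.exp_log (by nlinarith)
  have hq0 : (1:ℝ) < q := by
    rw [hqdef, show (1:ℝ) = Real.exp 0 from (Real.exp_zero).symm]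
    exact Real.exp_lt_exp.mpr (by norm_num)
  have hqsq : q^2 = Real.exp 1 := by rw [hqdef, sq, ← Real.exp_add]; norm_num
  have hqe : q^2 < 2.7225 := by rw [hqsq]; linarith [Real.exp_one_lt_d9]
  have e4 : Real.exp (-4 * u + 1 / 2 + 2 * phi u) = q * c^2 / C^4 := by
    rw [show (-4 * u + 1 / 2 + 2 * phi u) = (1/2 + (phi u + phi u)) - (u + u + (u + u)) by ring,
      Real.exp_sub, Real.exp_add, Real.exp_add, Real.exp_add, Real.exp_add]
    rw [← hcdef, ← hCdef, ← hqdef]; ring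
  have e2 : Real.exp (2 * u - 1 / 2 - 2 * phi u) = C^2 / (q * c^2) := by
    rw [show (2 * u - 1 / 2 - 2 * phi u) = (u + u) - (1/2 + (phi u + phi u)) by ring,
      Real.exp_sub, Real.exp_add, Real.exp_add, Real.exp_add]
    rw [← hcdef, ← hCdef, ← hqdef]; ring
  have m1 : Real.exp (-u + phi u) = c / C := by
    rw [show (-u + phi u) = phi u - u by ring, Real.exp_sub, ← hcdef, ← hCdef]
  have m2 : Real.exp (-u - phi u) = 1 / (C*c) := by
    rw [show (-u - phi u) = 0 - (u + phi u) by ring, Real.exp_sub, Real.exp_zero,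
      Real.exp_add, ← hcdef, ← hCdef]
  have hu' : u = Real.log C := by rw [hCdef]; exact (Real.log_exp u).symm
  clear_value y C x c q
  clear hydef hCdef hxdef hcdef hqdef
  -- arithmetic part
  have hC : 2.61 < C := lt_trans hy261 hyC
  have hy3 : (0:ℝ) < C + y - 3 := by linarith
  have hx1 : 1 < x := by nlinarith [hy2, hyC, mul_pos (sub_pos.2 hyC) hy3]
  have hsx' : Real.sqrt (x^2-1)^2 = x^2 - 1 := by
    rcases hsx with h | h
    · exact h
    · linarith
  have hcv : c = x + Real.sqrt (x^2-1) := hcval hx1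
  have hc1 : 1 < c := by rw [hcv]; nlinarith
  have hc0 : (0:ℝ) < c := by linarith
  have hcq : c^2 - 2*x*c + 1 = 0 := by rw [hcv]; linear_combination hsx'
  have hR : C*c^2 = (C^2 + 1 - C)*c - C := by linear_combination C*hcq + c*h2x
  have hId : (C - c) * (C*c - 1) = C*c := by linear_combination -hR
  have e1 : C*(C-1-c)*((C-1)*c-1) = c := by linear_combination (1-C)*hR
  have h3 : (0:ℝ) < (C-1)*c - 1 := by nlinarith
  have hcC : c < C - 1 := by nlinarith [e1, mul_pos hC0 h3]
  have hCc1 : (0:ℝ) < C*c - 1 := by nlinarith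
  have hCmc : (0:ℝ) < C - c := by linarith
  have hq0' : (0:ℝ) < q := by linarith
  have hq : q < 1.65 := by nlinarith [hqe, hq0']
  -- rewrite the exponentials
  rw [e4, e2, m1, m2]
  -- positivity of the two fractions
  have hN1 : (0:ℝ) < 1 + q * c^2 / C^4 := by
    have : (0:ℝ) < q * c^2 / C^4 := div_pos (mul_pos hq0' (pow_pos hc0 2)) (pow_pos hC0 4)
    linarith
  have hD1 : (0:ℝ) < 1 + C^2 / (q * c^2) := by
    have : (0:ℝ) < C^2 / (q * c^2) := div_pos (pow_pos hC0 2) (mul_pos hq0' (pow_pos hc0 2))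
    linarith
  have hN2 : (0:ℝ) < 1 - c / C := by
    rw [sub_pos, div_lt_one hC0]; linarith
  have hD2 : (0:ℝ) < 1 - 1 / (C*c) := by
    rw [sub_pos, div_lt_one (mul_pos hC0 hc0)]; nlinarith
  have hA : (0:ℝ) < (1 + q * c^2 / C^4) / (1 + C^2 / (q * c^2)) := div_pos hN1 hD1
  have hB : (0:ℝ) < (1 - c / C) / (1 - 1 / (C*c)) := div_pos hN2 hD2
  -- B * C = (C - c)^2
  have hBC : (1 - c / C) / (1 - 1 / (C*c)) * C = (C - c)^2 := by
    field_simp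
    rw [div_eq_iff (by rw [mul_comm]; exact hCc1.ne')]
    linear_combination -hId
  -- polynomial inequality, F-form
  have G := poly_ineq C c q hC hc1 hcC hq0 hq
  have F : (q*c^2*C^4 + q^2*c^4)*(C-c)^2 < q*c^2*C^4 + C^6 := by
    have key : ((q*c^2*C^4 + C^6) - (q*c^2*C^4 + q^2*c^4)*(C-c)^2) * (C*c-1)^2
        = C^6*(C*c-1)^2 - (q*c^2*C^4*(2*C*c-1) + q^2*C^2*c^6) := by
      linear_combination ((q*c^2*C^4 + q^2*c^4)*((C-c)*(C*c-1) + C*c) + 2*q*c^2*C^5 - 2*q*c^3*C^4 - 2*q*c^3*C^5 - 2*q*c^3*C^6 + 2*q*c^4*C^5 + 2*q^2*c^4*C - 2*q^2*c^5 - 2*q^2*c^5*C - 2*q^2*c^5*C^2 + 2*q^2*c^6*C)*hId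
    have hX : (q*c^2*C^4 + C^6) - (q*c^2*C^4 + q^2*c^4)*(C-c)^2
        = (C^6*(C*c-1)^2 - (q*c^2*C^4*(2*C*c-1) + q^2*C^2*c^6)) / (C*c-1)^2 := by
      rw [eq_div_iff (pow_pos hCc1 2).ne']; exact key
    have hXpos : 0 < (q*c^2*C^4 + C^6) - (q*c^2*C^4 + q^2*c^4)*(C-c)^2 := by
      rw [hX]; exact div_pos (by linarith [G]) (pow_pos hCc1 2)
    linarith
  -- A * (C-c)^2 < 1
  have hden : (0:ℝ) < q*c^2*C^4 := mul_pos (mul_pos hq0' (pow_pos hc0 2)) (pow_pos hC0 4)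
  have hstep : (1 + q * c^2 / C^4) / (1 + C^2 / (q * c^2)) * (C - c)^2 < 1 := by
    rw [div_mul_eq_mul_div, div_lt_one hD1, ← sub_pos]
    have expand : (1 + C^2 / (q * c^2)) - (1 + q * c^2 / C^4) * (C - c)^2
        = ((q*c^2*C^4 + C^6) - (q*c^2*C^4 + q^2*c^4)*(C-c)^2) / (q*c^2*C^4) := by
      field_simp
    rw [expand]
    exact div_pos (by linarith [F]) hden
  -- assemble
  rw [hu', ← Real.log_mul hA.ne' hB.ne', ← Real.log_mul (mul_pos hA hB).ne' hC0.ne']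
  apply Real.log_neg (mul_pos (mul_pos hA hB) hC0)
  calc (1 + q * c^2 / C^4) / (1 + C^2 / (q * c^2)) * ((1 - c / C) / (1 - 1 / (C*c))) * C
      = (1 + q * c^2 / C^4) / (1 + C^2 / (q * c^2)) * ((1 - c / C) / (1 - 1 / (C*c)) * C) := by
        ring
    _ = (1 + q * c^2 / C^4) / (1 + C^2 / (q * c^2)) * (C - c)^2 := by rw [hBC]
    _ < 1 := hstep
end
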